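/- Let M^(k)_{ℓ..r} be defined for all integer 0 ≤ ℓ ≤ r ≤ n by: M^(k)_{ℓ..ℓ} = I; M^(k)_{ℓ..r} = M_r if r−ℓ=1; and for r−ℓ>1, M^(k)_{ℓ..r} = ∑_{i+j=k} M^(i)_{ℓ..m}M^(j)_{m..r} − ∑_{i+j=k-1} M^(i)_{ℓ..m}M^(j)_{m..r} where m = LCA(ℓ,r). Then for every ℓ < r and every 1 ≤ h ≤ k: M^(k)_{ℓ..r} = ∑_{s=ℓ+1}^{r} M^(h-1)_{ℓ..s-1}·M_s·M^(k-h)_{s..r} − ∑_{s=ℓ+1}^{r-1} M^(h-1)_{ℓ..s}·M^(k-h)_{s..r}. -/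

import Mathlib

open Finset Matrix

/-- `(ℓ, r)` is a dyadic interval: `ℓ = i·2^t`, `r = ℓ + 2^t`. -/
def IsDyadicPair (ℓ r : ℕ) : Prop :=
  ∃ i t : ℕ, ℓ = i * 2 ^ t ∧ r = ℓ + 2 ^ t

/-- `m` is `LCA(ℓ, r)`: `m` is a multiple of `2^t` lying strictly in `(ℓ,r)`, where `t`
is the largest integer such that `(ℓ,r)` contains a multiple of `2^t`. -/
def IsLCA (ℓ r m : ℕ) : Prop :=
  ∃ t : ℕ, (ℓ < m ∧ m < r ∧ 2 ^ t ∣ m) ∧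
    ∀ t' m' : ℕ, ℓ < m' → m' < r → 2 ^ t' ∣ m' → t' ≤ t

lemma lca_exists {ℓ r : ℕ} (h : ℓ + 1 < r) : ∃ m, IsLCA ℓ r m := by
  classical
  set T : Finset ℕ := (Finset.range r).filter
    (fun t => ∃ m ∈ Finset.range r, ℓ < m ∧ 2 ^ t ∣ m) with hT
  have h0 : 0 ∈ T := by
    simp only [hT, Finset.mem_filter, Finset.mem_range]
    exact ⟨by omega, ℓ + 1, by omega, by omega, by simp⟩
  have hne : T.Nonempty := ⟨0, h0⟩
  obtain ⟨m, hmr, hlm, hdvd⟩ : ∃ m ∈ Finset.range r, ℓ < m ∧ 2 ^ (T.max' hne) ∣ m := by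
    have := T.max'_mem hne
    simp only [hT, Finset.mem_filter] at this
    exact this.2
  refine ⟨m, T.max' hne, ⟨hlm, Finset.mem_range.mp hmr, hdvd⟩, ?_⟩
  intro t' m' h1 h2 h3
  apply Finset.le_max'
  simp only [hT, Finset.mem_filter, Finset.mem_range]
  have h2t : 2 ^ t' ≤ m' := Nat.le_of_dvd (by omega) h3
  have ht' : t' < 2 ^ t' := Nat.lt_two_pow_self
  exact ⟨by omega, m', by omega, h1, h3⟩

lemma isLCA_sub_left {ℓ r m s : ℕ} (h : IsLCA ℓ r m) (h1 : ℓ ≤ s) (h2 : s < m) :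
    IsLCA s r m := by
  obtain ⟨t, ⟨ha, hb, hc⟩, hmax⟩ := h
  exact ⟨t, ⟨h2, hb, hc⟩, fun t' m' u1 u2 u3 => hmax t' m' (by omega) u2 u3⟩

lemma isLCA_sub_right {ℓ r m s : ℕ} (h : IsLCA ℓ r m) (h1 : m < s) (h2 : s ≤ r) :
    IsLCA ℓ s m := by
  obtain ⟨t, ⟨ha, hb, hc⟩, hmax⟩ := h
  exact ⟨t, ⟨ha, h1, hc⟩, fun t' m' u1 u2 u3 => hmax t' m' u1 (by omega) u3⟩

lemma not_dyadic_sub_left {ℓ r m s : ℕ} (h : IsLCA ℓ r m) (h1 : ℓ < s) (h2 : s < m) :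
    ¬ IsDyadicPair s r := by
  obtain ⟨t, ⟨ha, hb, hc⟩, hmax⟩ := h
  rintro ⟨i, u, his, hr⟩
  have hus : 2 ^ u ∣ s := ⟨i, by rw [his, mul_comm]⟩
  have hut : u ≤ t := hmax u s h1 (by omega) hus
  have h2um : 2 ^ u ∣ m := (pow_dvd_pow 2 hut).trans hc
  have hdvd : 2 ^ u ∣ (m - s) := Nat.dvd_sub h2um hus
  have hle := Nat.le_of_dvd (by omega) hdvd
  omega

lemma not_dyadic_sub_right {ℓ r m s : ℕ} (h : IsLCA ℓ r m) (h1 : m < s) (h2 : s < r) :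
    ¬ IsDyadicPair ℓ s := by
  obtain ⟨t, ⟨ha, hb, hc⟩, hmax⟩ := h
  rintro ⟨i, u, hil, hs⟩
  have hul : 2 ^ u ∣ ℓ := ⟨i, by rw [hil, mul_comm]⟩
  have hus : 2 ^ u ∣ s := by rw [hs]; exact Nat.dvd_add hul dvd_rfl
  have hut : u ≤ t := hmax u s (by omega) (by omega) hus
  have h2um : 2 ^ u ∣ m := (pow_dvd_pow 2 hut).trans hc
  have hdvd : 2 ^ u ∣ (m - ℓ) := Nat.dvd_sub h2um hul
  have hle := Nat.le_of_dvd (by omega) hdvd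
  omega



lemma fact_split {A : Type*} [AddCommMonoid A] (a c : ℕ) (f : ℕ → ℕ → A) :
    ∑ p ∈ antidiagonal (a + c + 1), f p.1 p.2
      = (∑ p ∈ antidiagonal c, f (a + 1 + p.1) p.2)
        + ∑ p ∈ antidiagonal a, f p.1 (c + p.2 + 1) := by
  induction c generalizing f with
  | zero =>
    rw [show a + 0 + 1 = a + 1 from rfl, Finset.Nat.sum_antidiagonal_succ']
    simp
  | succ c ih =>
    rw [show a + (c+1) + 1 = (a + c + 1) + 1 from by omega, Finset.Nat.sum_antidiagonal_succ]
    rw [ih (fun i j => f (i+1) j)]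
    rw [Finset.Nat.sum_antidiagonal_succ (f := fun p => f (a+1+p.1) p.2)]
    have e1 : ∑ p ∈ antidiagonal (a+1), f p.1 (c + p.2 + 1)
        = f 0 (c + (a+1) + 1) + ∑ p ∈ antidiagonal a, f (p.1+1) (c + p.2 + 1) :=
      Finset.Nat.sum_antidiagonal_succ (f := fun p => f p.1 (c + p.2 + 1))
    have e2 : ∑ p ∈ antidiagonal (a+1), f p.1 (c + p.2 + 1)
        = f (a+1) (c + 1) + ∑ p ∈ antidiagonal a, f p.1 (c + (p.2+1) + 1) :=
      Finset.Nat.sum_antidiagonal_succ' (f := fun p => f p.1 (c + p.2 + 1))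
    have e3 : f 0 (c + (a+1) + 1) + ∑ p ∈ antidiagonal a, f (p.1+1) (c + p.2 + 1)
        = f (a+1) (c + 1) + ∑ p ∈ antidiagonal a, f p.1 (c + (p.2+1) + 1) := by
      rw [← e1, e2]
    have e4 : ∀ p : ℕ × ℕ, f (a + 1 + (p.1 + 1)) p.2 = f (a + 1 + p.1 + 1) p.2 := fun p => rfl
    have e5 : ∀ p : ℕ × ℕ, f p.1 (c + (p.2 + 1) + 1) = f p.1 (c + 1 + p.2 + 1) := by
      intro p; have : c + (p.2 + 1) + 1 = c + 1 + p.2 + 1 := by omega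
      rw [this]
    have e6 : f 0 (a + c + 1 + 1) = f 0 (c + (a + 1) + 1) := by
      have : a + c + 1 + 1 = c + (a + 1) + 1 := by omega
      rw [this]
    simp only [e4, e5] at e3 ⊢
    rw [e6, add_left_comm, e3]
    abel

lemma fin_alg {A : Type*} [Ring A] (B C : ℕ → A) (a c : ℕ) :
    ((∑ p ∈ antidiagonal c, (B (a+1+p.1) - B a) * C p.2)
      - (if c = 0 then 0 else ∑ p ∈ antidiagonal (c-1), (B (a+1+p.1) - B a) * C p.2))
    + ((∑ p ∈ antidiagonal a, B p.1 * C (c+p.2+1))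
      - (if a = 0 then 0 else ∑ p ∈ antidiagonal (a-1), B p.1 * C (c+p.2+1)))
    = (∑ p ∈ antidiagonal (a+c+1), B p.1 * C p.2)
      - ∑ p ∈ antidiagonal (a+c), B p.1 * C p.2 := by
  rcases c with _ | c
  · rcases a with _ | a
    · simp only [Finset.Nat.antidiagonal_zero, Finset.sum_singleton, if_pos rfl,
        Finset.Nat.antidiagonal_succ, Finset.sum_cons, Finset.sum_map, sub_mul]
      simp
      abel
    · have hs1 := fact_split (a+1) 0 (fun i j => B i * C j)
      have e1 : ∑ p ∈ antidiagonal (a+1), B p.1 * C p.2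
          = B (a+1) * C 0 + ∑ p ∈ antidiagonal a, B p.1 * C (p.2+1) :=
        Finset.Nat.sum_antidiagonal_succ' (f := fun p => B p.1 * C p.2)
      simp only [Finset.Nat.antidiagonal_zero, Finset.sum_singleton, zero_add, add_zero,
        Nat.succ_ne_zero, if_false, if_pos rfl, ite_true, eq_self_iff_true,
        Nat.succ_sub_one, sub_zero, sub_mul] at hs1 ⊢
      rw [hs1, e1]
      abel
  · simp only [Nat.succ_ne_zero, if_false, Nat.succ_sub_one, sub_mul, Finset.sum_sub_distrib]
    have hs1 := fact_split a (c+1) (fun i j => B i * C j)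
    have hs2 := fact_split a c (fun i j => B i * C j)
    have hP2 : ∑ p ∈ antidiagonal (c+1), B a * C p.2
        = B a * C (c+1) + ∑ p ∈ antidiagonal c, B a * C p.2 :=
      Finset.Nat.sum_antidiagonal_succ (f := fun p => B a * C p.2)
    have hQ : ∑ p ∈ antidiagonal a, B p.1 * C (c+p.2+1)
        = B a * C (c+1) + (if a = 0 then 0 else
            ∑ p ∈ antidiagonal (a-1), B p.1 * C (c+1+p.2+1)) := by
      rcases a with _ | a
      · simp
      · rw [if_neg (Nat.succ_ne_zero a), Nat.succ_sub_one]
        have e3 : ∑ p ∈ antidiagonal (a+1), B p.1 * C (c + p.2 + 1)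
            = B (a+1) * C (c + 0 + 1) + ∑ p ∈ antidiagonal a, B p.1 * C (c + (p.2+1) + 1) :=
          Finset.Nat.sum_antidiagonal_succ' (f := fun p => B p.1 * C (c + p.2 + 1))
        rw [e3]
        congr 1
        refine Finset.sum_congr rfl fun p _ => ?_
        have : c + (p.2 + 1) + 1 = c + 1 + p.2 + 1 := by omega
        rw [this]
    rw [hs1, show a + (c+1) = a + c + 1 from by omega, hs2, hP2, hQ]
    abel


/-- Lemma 4.7 (the new recursion): if the matrices `M^(k)_{ℓ..r}` satisfy
`M^(k)_{ℓ..ℓ} = I`, `M^(k)_{ℓ..ℓ+1} = M_{ℓ+1}`, and the LCA-based binary recursion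
(for all `k ≥ 1`, and also for `k = 0` on non-dyadic intervals), then for every
`ℓ < r ≤ n` and every `1 ≤ h ≤ k`,
`M^(k)_{ℓ..r} = ∑_{s=ℓ+1}^{r} M^(h-1)_{ℓ..s-1} M_s M^(k-h)_{s..r}
  − ∑_{s=ℓ+1}^{r-1} M^(h-1)_{ℓ..s} M^(k-h)_{s..r}`. -/
theorem stmt_13 (w n : ℕ) (M : ℕ → Matrix (Fin w) (Fin w) ℝ)
    (Mk : ℕ → ℕ → ℕ → Matrix (Fin w) (Fin w) ℝ)
    (hid : ∀ k ℓ : ℕ, Mk k ℓ ℓ = 1)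
    (hbase : ∀ k ℓ : ℕ, Mk k ℓ (ℓ + 1) = M (ℓ + 1))
    (hrec : ∀ k ℓ r m : ℕ, 1 < r - ℓ → IsLCA ℓ r m → (1 ≤ k ∨ ¬IsDyadicPair ℓ r) →
      Mk k ℓ r =
        (∑ p ∈ Finset.HasAntidiagonal.antidiagonal k, Mk p.1 ℓ m * Mk p.2 m r) -
          (if k = 0 then 0 else
            ∑ p ∈ Finset.HasAntidiagonal.antidiagonal (k - 1), Mk p.1 ℓ m * Mk p.2 m r))
    (ℓ r h k : ℕ) (hlr : ℓ < r) (hrn : r ≤ n) (hh1 : 1 ≤ h) (hhk : h ≤ k) :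
    Mk k ℓ r =
      (∑ s ∈ Finset.Ioc ℓ r, Mk (h - 1) ℓ (s - 1) * M s * Mk (k - h) s r) -
        ∑ s ∈ Finset.Ioo ℓ r, Mk (h - 1) ℓ s * Mk (k - h) s r := by
  clear hrn
  suffices H : ∀ d ℓ r h k : ℕ, r - ℓ ≤ d → ℓ < r → 1 ≤ h → h ≤ k →
      Mk k ℓ r =
        (∑ s ∈ Finset.Ioc ℓ r, Mk (h - 1) ℓ (s - 1) * M s * Mk (k - h) s r) -
          ∑ s ∈ Finset.Ioo ℓ r, Mk (h - 1) ℓ s * Mk (k - h) s r by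
    exact H (r - ℓ) ℓ r h k le_rfl hlr hh1 hhk
  intro d
  induction d with
  | zero => intro ℓ r h k hd hlr _ _; omega
  | succ d IH =>
    intro ℓ r h k hd hlr hh1 hhk
    obtain ⟨a, rfl⟩ : ∃ a, h = a + 1 := ⟨h - 1, by omega⟩
    obtain ⟨c, rfl⟩ : ∃ c, k = a + 1 + c := ⟨k - (a + 1), by omega⟩
    rw [show a + 1 - 1 = a from rfl, show a + 1 + c - (a + 1) = c from by omega]
    by_cases hb1 : r = ℓ + 1
    · subst hb1
      rw [show Finset.Ioc ℓ (ℓ + 1) = {ℓ + 1} from by ext x; simp only [Finset.mem_Ioc, Finset.mem_singleton]; omega,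
        show Finset.Ioo ℓ (ℓ + 1) = (∅ : Finset ℕ) from by ext x; simp only [Finset.mem_Ioo, Finset.notMem_empty, iff_false, not_and]; omega]
      simp [hid, hbase]
    · have hlr2 : ℓ + 1 < r := by omega
      obtain ⟨m, hm⟩ := lca_exists hlr2
      obtain ⟨hlm, hmr⟩ : ℓ < m ∧ m < r := by
        obtain ⟨t, ⟨h1, h2, _⟩, _⟩ := hm; exact ⟨h1, h2⟩
      have expE : ∀ s, ℓ < s → s ≤ m → Mk c s r =
          (∑ p ∈ Finset.HasAntidiagonal.antidiagonal c, Mk p.1 s m * Mk p.2 m r) -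
            (if c = 0 then 0 else
              ∑ p ∈ Finset.HasAntidiagonal.antidiagonal (c - 1), Mk p.1 s m * Mk p.2 m r) := by
        intro s hs1 hs2
        rcases eq_or_lt_of_le hs2 with rfl | hs2'
        · rcases c with _ | c
          · simp [hid]
          · rw [if_neg (Nat.succ_ne_zero c), Nat.succ_sub_one,
              Finset.Nat.sum_antidiagonal_succ (f := fun p => Mk p.1 s s * Mk p.2 s r)]
            simp [hid]
        · exact hrec c s r m (by omega) (isLCA_sub_left hm hs1.le hs2')
            (Or.inr (not_dyadic_sub_left hm hs1 hs2'))
      have expD : ∀ u, m ≤ u → u < r → Mk a ℓ u =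
          (∑ p ∈ Finset.HasAntidiagonal.antidiagonal a, Mk p.1 ℓ m * Mk p.2 m u) -
            (if a = 0 then 0 else
              ∑ p ∈ Finset.HasAntidiagonal.antidiagonal (a - 1), Mk p.1 ℓ m * Mk p.2 m u) := by
        intro u hu1 hu2
        rcases eq_or_lt_of_le hu1 with rfl | hu1'
        · rcases a with _ | a
          · simp [hid]
          · rw [if_neg (Nat.succ_ne_zero a), Nat.succ_sub_one,
              Finset.Nat.sum_antidiagonal_succ' (f := fun p => Mk p.1 ℓ m * Mk p.2 m m)]
            simp [hid]
        · exact hrec a ℓ u m (by omega) (isLCA_sub_right hm hu1' hu2.le)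
            (Or.inr (not_dyadic_sub_right hm hu1' hu2))
      have key1 : ∀ i : ℕ,
          (∑ s ∈ Finset.Ioc ℓ m, Mk a ℓ (s - 1) * M s * Mk i s m)
            - ∑ s ∈ Finset.Ioc ℓ m, Mk a ℓ s * Mk i s m
          = Mk (a + 1 + i) ℓ m - Mk a ℓ m := by
        intro i
        have h1 := IH ℓ m (a + 1) (a + 1 + i) (by omega) hlm (by omega) (by omega)
        rw [show a + 1 - 1 = a from rfl, show a + 1 + i - (a + 1) = i from by omega] at h1
        have h2 : ∑ s ∈ Finset.Ioc ℓ m, Mk a ℓ s * Mk i s m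
            = (∑ s ∈ Finset.Ioo ℓ m, Mk a ℓ s * Mk i s m) + Mk a ℓ m := by
          rw [← Finset.Ioo_insert_right hlm, Finset.sum_insert (by simp), hid, mul_one,
            add_comm]
        rw [h1, h2]
        abel
      have key2 : ∀ b : ℕ,
          (∑ s ∈ Finset.Ioc m r, Mk b m (s - 1) * M s * Mk c s r)
            - ∑ s ∈ Finset.Ioo m r, Mk b m s * Mk c s r
          = Mk (c + b + 1) m r := by
        intro b
        have h1 := IH m r (b + 1) (b + 1 + c) (by omega) hmr (by omega) (by omega)
        rw [show b + 1 - 1 = b from rfl, show b + 1 + c - (b + 1) = c from by omega] at h1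
        rw [show c + b + 1 = b + 1 + c from by omega]
        exact h1.symm
      have coreL : ∀ nn : ℕ,
          ∑ s ∈ Finset.Ioc ℓ m, ((Mk a ℓ (s - 1) * M s - Mk a ℓ s) *
              ∑ p ∈ Finset.HasAntidiagonal.antidiagonal nn, Mk p.1 s m * Mk p.2 m r)
          = ∑ p ∈ Finset.HasAntidiagonal.antidiagonal nn,
              (Mk (a + 1 + p.1) ℓ m - Mk a ℓ m) * Mk p.2 m r := by
        intro nn
        have e : ∀ s : ℕ, (Mk a ℓ (s - 1) * M s - Mk a ℓ s) *
              (∑ p ∈ Finset.HasAntidiagonal.antidiagonal nn, Mk p.1 s m * Mk p.2 m r)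
            = ∑ p ∈ Finset.HasAntidiagonal.antidiagonal nn,
                ((Mk a ℓ (s - 1) * M s - Mk a ℓ s) * Mk p.1 s m) * Mk p.2 m r := by
          intro s
          rw [Finset.mul_sum]
          exact Finset.sum_congr rfl fun p _ => (mul_assoc _ _ _).symm
        simp only [e]
        rw [Finset.sum_comm]
        refine Finset.sum_congr rfl fun p _ => ?_
        rw [← Finset.sum_mul]
        congr 1
        have e2 : ∀ s : ℕ, (Mk a ℓ (s - 1) * M s - Mk a ℓ s) * Mk p.1 s m
            = Mk a ℓ (s - 1) * M s * Mk p.1 s m - Mk a ℓ s * Mk p.1 s m :=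
          fun s => sub_mul _ _ _
        simp only [e2]
        rw [Finset.sum_sub_distrib]
        exact key1 p.1
      have claimL : (∑ s ∈ Finset.Ioc ℓ m, Mk a ℓ (s - 1) * M s * Mk c s r)
            - ∑ s ∈ Finset.Ioc ℓ m, Mk a ℓ s * Mk c s r
          = (∑ p ∈ Finset.HasAntidiagonal.antidiagonal c,
              (Mk (a + 1 + p.1) ℓ m - Mk a ℓ m) * Mk p.2 m r)
            - (if c = 0 then 0 else ∑ p ∈ Finset.HasAntidiagonal.antidiagonal (c - 1),
                (Mk (a + 1 + p.1) ℓ m - Mk a ℓ m) * Mk p.2 m r) := by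
        rw [← Finset.sum_sub_distrib]
        have e : ∀ s ∈ Finset.Ioc ℓ m,
            Mk a ℓ (s - 1) * M s * Mk c s r - Mk a ℓ s * Mk c s r
            = ((Mk a ℓ (s - 1) * M s - Mk a ℓ s) *
                ∑ p ∈ Finset.HasAntidiagonal.antidiagonal c, Mk p.1 s m * Mk p.2 m r)
              - (if c = 0 then 0 else (Mk a ℓ (s - 1) * M s - Mk a ℓ s) *
                  ∑ p ∈ Finset.HasAntidiagonal.antidiagonal (c - 1), Mk p.1 s m * Mk p.2 m r) := by
          intro s hs
          rw [Finset.mem_Ioc] at hs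
          rw [← sub_mul, expE s hs.1 hs.2, mul_sub]
          congr 1
          rcases c with _ | c
          · simp
          · simp only [Nat.succ_ne_zero, if_false]
        rw [Finset.sum_congr rfl e, Finset.sum_sub_distrib, coreL]
        congr 1
        rcases c with _ | c
        · simp
        · simp only [Nat.succ_ne_zero, if_false]
          exact coreL c
      have coreR : ∀ nn : ℕ,
          (∑ s ∈ Finset.Ioc m r, ∑ p ∈ Finset.HasAntidiagonal.antidiagonal nn,
              Mk p.1 ℓ m * Mk p.2 m (s - 1) * M s * Mk c s r)
            - ∑ s ∈ Finset.Ioo m r, ∑ p ∈ Finset.HasAntidiagonal.antidiagonal nn,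
                Mk p.1 ℓ m * Mk p.2 m s * Mk c s r
          = ∑ p ∈ Finset.HasAntidiagonal.antidiagonal nn, Mk p.1 ℓ m * Mk (c + p.2 + 1) m r := by
        intro nn
        rw [Finset.sum_comm, Finset.sum_comm (s := Finset.Ioo m r),
          ← Finset.sum_sub_distrib]
        refine Finset.sum_congr rfl fun p _ => ?_
        have e1 : ∀ s : ℕ, Mk p.1 ℓ m * Mk p.2 m (s - 1) * M s * Mk c s r
            = Mk p.1 ℓ m * (Mk p.2 m (s - 1) * M s * Mk c s r) := fun s => by
          simp only [mul_assoc]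
        have e2 : ∀ s : ℕ, Mk p.1 ℓ m * Mk p.2 m s * Mk c s r
            = Mk p.1 ℓ m * (Mk p.2 m s * Mk c s r) := fun s => by
          simp only [mul_assoc]
        simp only [e1, e2]
        rw [← Finset.mul_sum, ← Finset.mul_sum, ← mul_sub, key2 p.2]
      have claimR : (∑ s ∈ Finset.Ioc m r, Mk a ℓ (s - 1) * M s * Mk c s r)
            - ∑ s ∈ Finset.Ioo m r, Mk a ℓ s * Mk c s r
          = (∑ p ∈ Finset.HasAntidiagonal.antidiagonal a, Mk p.1 ℓ m * Mk (c + p.2 + 1) m r)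
            - (if a = 0 then 0 else ∑ p ∈ Finset.HasAntidiagonal.antidiagonal (a - 1),
                Mk p.1 ℓ m * Mk (c + p.2 + 1) m r) := by
        have e1 : ∀ s ∈ Finset.Ioc m r, Mk a ℓ (s - 1) * M s * Mk c s r
            = (∑ p ∈ Finset.HasAntidiagonal.antidiagonal a,
                Mk p.1 ℓ m * Mk p.2 m (s - 1) * M s * Mk c s r)
              - (if a = 0 then 0 else ∑ p ∈ Finset.HasAntidiagonal.antidiagonal (a - 1),
                  Mk p.1 ℓ m * Mk p.2 m (s - 1) * M s * Mk c s r) := by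
          intro s hs
          rw [Finset.mem_Ioc] at hs
          rw [expD (s - 1) (by omega) (by omega)]
          rcases a with _ | a
          · simp [Finset.sum_mul]
          · simp only [Nat.succ_ne_zero, if_false, Nat.succ_sub_one, sub_mul,
              Finset.sum_mul]
        have e2 : ∀ s ∈ Finset.Ioo m r, Mk a ℓ s * Mk c s r
            = (∑ p ∈ Finset.HasAntidiagonal.antidiagonal a, Mk p.1 ℓ m * Mk p.2 m s * Mk c s r)
              - (if a = 0 then 0 else ∑ p ∈ Finset.HasAntidiagonal.antidiagonal (a - 1),
                  Mk p.1 ℓ m * Mk p.2 m s * Mk c s r) := by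
          intro s hs
          rw [Finset.mem_Ioo] at hs
          rw [expD s (by omega) (by omega)]
          rcases a with _ | a
          · simp [Finset.sum_mul]
          · simp only [Nat.succ_ne_zero, if_false, Nat.succ_sub_one, sub_mul,
              Finset.sum_mul]
        rw [Finset.sum_congr rfl e1, Finset.sum_congr rfl e2,
          Finset.sum_sub_distrib, Finset.sum_sub_distrib]
        rcases a with _ | a
        · simpa using coreR 0
        · simp only [Nat.succ_ne_zero, if_false, Nat.succ_sub_one]
          rw [sub_sub_sub_comm]
          rw [coreR (a + 1), coreR a]
      have hd1 : Disjoint (Finset.Ioc ℓ m) (Finset.Ioc m r) := by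
        rw [Finset.disjoint_left]
        intro x hx hy
        rw [Finset.mem_Ioc] at hx hy
        omega
      have hd2 : Disjoint (Finset.Ioc ℓ m) (Finset.Ioo m r) := by
        rw [Finset.disjoint_left]
        intro x hx hy
        rw [Finset.mem_Ioc] at hx
        rw [Finset.mem_Ioo] at hy
        omega
      have hIoc : Finset.Ioc ℓ r = Finset.Ioc ℓ m ∪ Finset.Ioc m r :=
        (Finset.Ioc_union_Ioc_eq_Ioc hlm.le hmr.le).symm
      have hIoo : Finset.Ioo ℓ r = Finset.Ioc ℓ m ∪ Finset.Ioo m r := by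
        ext x
        simp only [Finset.mem_Ioo, Finset.mem_union, Finset.mem_Ioc]
        omega
      rw [hrec (a + 1 + c) ℓ r m (by omega) hm (Or.inl (by omega)),
        if_neg (by omega : ¬ a + 1 + c = 0),
        show a + 1 + c - 1 = a + c from by omega,
        show a + 1 + c = a + c + 1 from by omega,
        hIoc, hIoo, Finset.sum_union hd1, Finset.sum_union hd2,
        add_sub_add_comm, claimL, claimR]
      have hfin := fin_alg (fun i => Mk i ℓ m) (fun j => Mk j m r) a c
      rw [hfin]
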